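/- arXiv:2101.12452 — 3 statements merged into one kernel-verified Lean document; each statement's English description precedes it below -/
import Mathlib

section
/- Let A be a commutative Noetherian local ring and let I ⊆ A[X] be an ideal such that the quotient ring A[X]/I is a finitely generated flat A-module. Then there exists a unique monic polynomial P ∈ A[X] such that I is the ideal generated by P. -/
open Polynomial IsLocalRing


lemma mk_eq_aeval' {A : Type*} [CommRing A] (I₀ : Ideal (Polynomial A)) (p : Polynomial A) :
    Ideal.Quotient.mk I₀ p = Polynomial.aeval (Ideal.Quotient.mk I₀ Polynomial.X) p := by
  rw [aeval_def, ← Polynomial.eval₂_C_X (p := p), Polynomial.hom_eval₂]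
  congr 1
  ext a
  simp [← Ideal.Quotient.mk_algebraMap, Polynomial.algebraMap_eq]

lemma mk_C_mul {A : Type*} [CommRing A] (I₀ : Ideal (Polynomial A)) (a : A) (q : Polynomial A) :
    Ideal.Quotient.mk I₀ (Polynomial.C a * q) = a • Ideal.Quotient.mk I₀ q := by
  rw [← Polynomial.smul_eq_C_mul]
  rfl

lemma mk_mem_smul_top {A : Type*} [CommRing A] [IsLocalRing A] (I₀ : Ideal (Polynomial A))
    {p : Polynomial A} (hp : ∀ i, p.coeff i ∈ maximalIdeal A) :
    Ideal.Quotient.mk I₀ p ∈ (maximalIdeal A) • (⊤ : Submodule A (Polynomial A ⧸ I₀)) := by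
  rw [show p = p.sum fun n a => Polynomial.C a * Polynomial.X ^ n from
    (Polynomial.sum_C_mul_X_pow_eq p).symm, Polynomial.sum, map_sum]
  refine Submodule.sum_mem _ fun i _ => ?_
  rw [mk_C_mul]
  exact Submodule.smul_mem_smul (hp i) trivial


private lemma step1 {A : Type*} [CommRing A] [IsNoetherianRing A] [IsLocalRing A]
    (I : Ideal (Polynomial A)) (hfin : Module.Finite A (Polynomial A ⧸ I)) :
    ∃ P : Polynomial A, P.Monic ∧ P ∈ I ∧
      Ideal.map (Polynomial.mapRingHom (residue A)) I = Ideal.span {P.map (residue A)} := by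
  classical
  obtain ⟨g₀, hg₀m, hg₀0⟩ := IsIntegral.of_finite A (Ideal.Quotient.mk I X)
  have hg₀I : g₀ ∈ I := by
    rw [← Ideal.Quotient.eq_zero_iff_mem, mk_eq_aeval', aeval_def]
    exact hg₀0
  set res := residue A with hres
  set φ := Polynomial.mapRingHom res with hφ
  have hφsurj : Function.Surjective φ := Polynomial.map_surjective res residue_surjective
  set J := Ideal.map φ I with hJ
  obtain ⟨f₁, hf₁⟩ : ∃ a, J = Ideal.span {a} :=
    ⟨Submodule.IsPrincipal.generator J, (Ideal.span_singleton_generator J).symm⟩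
  have hg₀J : g₀.map res ∈ J := Ideal.mem_map_of_mem φ hg₀I
  have hf₁0 : f₁ ≠ 0 := by
    rintro rfl
    rw [hf₁, Ideal.span_singleton_eq_bot.mpr rfl, Ideal.mem_bot] at hg₀J
    exact (hg₀m.map res).ne_zero hg₀J
  set f := f₁ * C (leadingCoeff f₁)⁻¹ with hf
  have hfm : f.Monic := monic_mul_leadingCoeff_inv hf₁0
  have hJf : J = Ideal.span {f} := by
    rw [hf₁, hf, Ideal.span_singleton_mul_right_unit]
    exact (isUnit_C).mpr (inv_ne_zero (leadingCoeff_ne_zero.mpr hf₁0)).isUnit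
  set d := f.natDegree with hd
  -- lift f to monic P₀
  obtain ⟨P₀, hP₀map, hP₀deg, hP₀m⟩ :=
    lifts_and_degree_eq_and_monic ((mem_lifts f).mpr (hφsurj f)) hfm
  have hP₀d : P₀.natDegree = d := by
    rw [← hP₀m.natDegree_map res, hP₀map]
  set x := Ideal.Quotient.mk I X with hx
  set N := Submodule.span A (Set.range fun i : Fin d => x ^ (i : ℕ)) with hN
  have htop : (⊤ : Submodule A (Polynomial A ⧸ I)) ≤ N ⊔ maximalIdeal A • ⊤ := by
    rintro y -
    obtain ⟨p, rfl⟩ := Ideal.Quotient.mk_surjective y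
    have hsplit : Ideal.Quotient.mk I p
        = Ideal.Quotient.mk I (p %ₘ P₀) + Ideal.Quotient.mk I (P₀ * (p /ₘ P₀)) := by
      rw [← map_add, modByMonic_add_div p P₀]
    rw [hsplit]
    refine Submodule.add_mem_sup ?_ ?_
    · by_cases h0 : p %ₘ P₀ = 0
      · rw [h0, map_zero]; exact zero_mem N
      · have hdeg : (p %ₘ P₀).natDegree < d :=
          hP₀d ▸ natDegree_lt_natDegree h0 (degree_modByMonic_lt p hP₀m)
        rw [mk_eq_aeval', aeval_eq_sum_range' hdeg]
        exact Submodule.sum_mem _ fun i hi => Submodule.smul_mem _ _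
          (Submodule.subset_span ⟨⟨i, Finset.mem_range.mp hi⟩, rfl⟩)
    · obtain ⟨g₁, hg₁I, hg₁map⟩ := Ideal.mem_map_iff_of_surjective φ hφsurj |>.mp
        (hJf ▸ Ideal.mem_span_singleton_self f)
      have heq : Ideal.Quotient.mk I (P₀ * (p /ₘ P₀))
          = Ideal.Quotient.mk I ((P₀ - g₁) * (p /ₘ P₀)) := by
        rw [Ideal.Quotient.mk_eq_mk_iff_sub_mem]
        have : P₀ * (p /ₘ P₀) - (P₀ - g₁) * (p /ₘ P₀) = g₁ * (p /ₘ P₀) := by ring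
        rw [this]
        exact I.mul_mem_right _ hg₁I
      rw [heq]
      have hcoeff : ∀ j, (P₀ - g₁).coeff j ∈ maximalIdeal A := by
        have hmap0 : (P₀ - g₁).map res = 0 := by
          simp only [hφ, Polynomial.coe_mapRingHom] at hg₁map
          rw [Polynomial.map_sub, hP₀map, hg₁map, sub_self]
        intro j
        have := congrArg (fun q => Polynomial.coeff q j) hmap0
        simp only [coeff_map, coeff_zero] at this
        exact Ideal.Quotient.eq_zero_iff_mem.mp this
      refine mk_mem_smul_top I fun i => ?_
      rw [coeff_mul]
      exact Ideal.sum_mem _ fun z _ => Ideal.mul_mem_right _ _ (hcoeff z.1)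
  have hNtop : N = ⊤ := top_le_iff.mp (Submodule.le_of_le_smul_of_le_jacobson_bot
    (Module.finite_def.mp hfin) (maximalIdeal_le_jacobson ⊥) htop)
  have hxd : x ^ d ∈ N := by rw [hNtop]; trivial
  rw [hN, Submodule.mem_span_range_iff_exists_fun] at hxd
  obtain ⟨c, hc⟩ := hxd
  set P : Polynomial A := X ^ d - ∑ i : Fin d, C (c i) * X ^ (i : ℕ) with hP
  have hSdeg : (∑ i : Fin d, C (c i) * X ^ (i : ℕ)).degree < (d : WithBot ℕ) := by
    refine lt_of_le_of_lt (degree_sum_le _ _) ?_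
    rw [Finset.sup_lt_iff (by exact_mod_cast WithBot.bot_lt_coe d)]
    intro i _
    exact lt_of_le_of_lt (degree_C_mul_X_pow_le _ _) (by exact_mod_cast i.isLt)
  have hPm : P.Monic := monic_X_pow_sub hSdeg
  have hPdeg : P.natDegree = d := by
    have : P.degree = (d : ℕ) := by
      rw [hP, degree_sub_eq_left_of_degree_lt (by rwa [degree_X_pow]), degree_X_pow]
    exact natDegree_eq_of_degree_eq_some this
  have hPI : P ∈ I := by
    rw [← Ideal.Quotient.eq_zero_iff_mem, hP, map_sub, map_pow, map_sum]
    have : ∀ i : Fin d, Ideal.Quotient.mk I (C (c i) * X ^ (i : ℕ)) = c i • x ^ (i : ℕ) := by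
      intro i; rw [mk_C_mul, map_pow]
    rw [Finset.sum_congr rfl fun i _ => this i]
    exact sub_eq_zero.mpr hc.symm
  have hPmap : P.map res = f := by
    have h1 : P.map res ∈ J := Ideal.mem_map_of_mem φ hPI
    rw [hJf, Ideal.mem_span_singleton] at h1
    obtain ⟨u, hu⟩ := h1
    have hfne : f ≠ 0 := hfm.ne_zero
    have hPMm : (P.map res).Monic := hPm.map res
    have hu0 : u ≠ 0 := by rintro rfl; rw [mul_zero] at hu; exact hPMm.ne_zero hu
    have hdeg2 : (P.map res).natDegree = d := by rw [hPm.natDegree_map, hPdeg]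
    have hsum : f.natDegree + u.natDegree = d := by
      rw [← Polynomial.natDegree_mul hfne hu0, ← hu, hdeg2]
    have hud : u.natDegree = 0 := by omega
    have hlc : u.leadingCoeff = 1 := by
      have h2 : f.leadingCoeff * u.leadingCoeff = (P.map res).leadingCoeff := by
        rw [← leadingCoeff_mul, ← hu]
      rw [hfm.leadingCoeff, one_mul, hPMm.leadingCoeff] at h2
      exact h2
    have hu1 : u = 1 := by
      rw [Polynomial.eq_C_of_natDegree_eq_zero hud]
      rw [Polynomial.leadingCoeff, hud] at hlc
      rw [hlc, map_one]
    rw [hu, hu1, mul_one]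
  exact ⟨P, hPm, hPI, by rw [hPmap]; exact hJf⟩


private lemma step2 {A : Type*} [CommRing A] [IsNoetherianRing A] [IsLocalRing A]
    (I : Ideal (Polynomial A)) (hfin : Module.Finite A (Polynomial A ⧸ I)) (hflat : Module.Flat A (Polynomial A ⧸ I))
    {P : Polynomial A} (hPm : P.Monic) (hPI : P ∈ I)
    (hJP : Ideal.map (Polynomial.mapRingHom (residue A)) I = Ideal.span {P.map (residue A)}) :
    I = Ideal.span {P} := by
  classical
  have hspanle : Ideal.span {P} ≤ I := (Ideal.span_singleton_le_iff_mem _).mpr hPI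
  set ψ : (Polynomial A ⧸ Ideal.span {P}) →ₐ[A] Polynomial A ⧸ I :=
    Ideal.Quotient.liftₐ (Ideal.span {P}) (Ideal.Quotient.mkₐ A I)
      (fun a ha => by
        rw [Ideal.Quotient.mkₐ_eq_mk, Ideal.Quotient.eq_zero_iff_mem]
        exact hspanle ha) with hψ
  have hψmk : ∀ p : Polynomial A,
      ψ (Ideal.Quotient.mk (Ideal.span {P}) p) = Ideal.Quotient.mk I p := fun p => by
    simp only [hψ, Ideal.Quotient.liftₐ_apply, Ideal.Quotient.lift_mk]
    rfl
  have hψsurj : Function.Surjective ψ := fun y => by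
    obtain ⟨p, rfl⟩ := Ideal.Quotient.mk_surjective y
    exact ⟨Ideal.Quotient.mk _ p, hψmk p⟩
  have hmodeq : ∀ p : Polynomial A, Ideal.Quotient.mk (Ideal.span {P}) p
      = Ideal.Quotient.mk (Ideal.span {P}) (p %ₘ P) := by
    intro p
    rw [Ideal.Quotient.mk_eq_mk_iff_sub_mem, Ideal.mem_span_singleton]
    exact ⟨p /ₘ P, by linear_combination -modByMonic_add_div p P⟩
  have hBspan : (⊤ : Submodule A (Polynomial A ⧸ Ideal.span {P}))
      ≤ Submodule.span A (Set.range fun i : Fin (P.natDegree + 1)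
          => (Ideal.Quotient.mk (Ideal.span {P}) X) ^ (i : ℕ)) := by
    rintro y -
    obtain ⟨p, rfl⟩ := Ideal.Quotient.mk_surjective y
    rw [hmodeq p]
    by_cases h0 : p %ₘ P = 0
    · rw [h0, map_zero]; exact zero_mem _
    · have hdeg : (p %ₘ P).natDegree < P.natDegree + 1 :=
        Nat.lt_succ_of_lt (natDegree_lt_natDegree h0 (degree_modByMonic_lt p hPm))
      have hre := mk_eq_aeval' (Ideal.span {P}) (p %ₘ P)
      rw [hre, aeval_eq_sum_range' hdeg]
      exact Submodule.sum_mem _ fun i hi => Submodule.smul_mem _ _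
        (Submodule.subset_span ⟨⟨i, Finset.mem_range.mp hi⟩, rfl⟩)
  haveI hBfin : Module.Finite A (Polynomial A ⧸ Ideal.span {P}) :=
    ⟨eq_top_iff.mpr hBspan ▸ Submodule.fg_span (Set.finite_range _)⟩
  set K := LinearMap.ker ψ.toLinearMap with hK
  have hKfg : K.FG := (isNoetherian_of_isNoetherianRing_of_finite A _).noetherian K
  have hKle : K ≤ maximalIdeal A • ⊤ := by
    intro v hv
    obtain ⟨p, rfl⟩ := Ideal.Quotient.mk_surjective v
    have hpI : p ∈ I := by
      have h7 := LinearMap.mem_ker.mp hv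
      rw [AlgHom.toLinearMap_apply, hψmk] at h7
      exact Ideal.Quotient.eq_zero_iff_mem.mp h7
    rw [hmodeq p]
    refine mk_mem_smul_top _ fun i => ?_
    have hfdvd : (P.map (residue A)) ∣ (p.map (residue A)) := by
      rw [← Ideal.mem_span_singleton, ← hJP]
      exact Ideal.mem_map_of_mem _ hpI
    have hmap0 : (p %ₘ P).map (residue A) = 0 := by
      rw [Polynomial.map_modByMonic _ hPm]
      exact (modByMonic_eq_zero_iff_dvd (hPm.map _)).mpr hfdvd
    have h3 := congrArg (fun q => Polynomial.coeff q i) hmap0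
    simp only [coeff_map, coeff_zero] at h3
    exact Ideal.Quotient.eq_zero_iff_mem.mp h3
  haveI : Module.FinitePresentation A (Polynomial A ⧸ I) :=
    Module.finitePresentation_of_finite A _
  haveI : Module.Free A (Polynomial A ⧸ I) := Module.free_of_flat_of_isLocalRing
  obtain ⟨s, hs⟩ := Module.projective_lifting_property ψ.toLinearMap LinearMap.id
    (fun y => by obtain ⟨b, hb⟩ := hψsurj y; exact ⟨b, hb⟩)
  have hKsmul : K ≤ maximalIdeal A • K := by
    intro v hv
    set π : (Polynomial A ⧸ Ideal.span {P}) →ₗ[A] (Polynomial A ⧸ Ideal.span {P}) :=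
      LinearMap.id - s ∘ₗ ψ.toLinearMap with hπ
    have hrange : Submodule.map π ⊤ ≤ K := by
      rintro w ⟨u, -, rfl⟩
      rw [hK, LinearMap.mem_ker]
      have h4 : ψ.toLinearMap (s (ψ.toLinearMap u)) = ψ.toLinearMap u :=
        congrArg (fun g => g (ψ.toLinearMap u)) hs
      simp only [hπ, LinearMap.sub_apply, LinearMap.id_apply, LinearMap.coe_comp,
        Function.comp_apply, map_sub, h4, sub_self]
    have hπv : π v = v := by
      simp only [hπ, LinearMap.sub_apply, LinearMap.id_apply, LinearMap.coe_comp,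
        Function.comp_apply, LinearMap.mem_ker.mp hv, map_zero, sub_zero]
    have h5 : π v ∈ maximalIdeal A • Submodule.map π ⊤ := by
      rw [← Submodule.map_smul'']
      exact Submodule.mem_map_of_mem (hKle hv)
    exact hπv ▸ Submodule.smul_mono le_rfl hrange h5
  have hKbot : K = ⊥ := Submodule.eq_bot_of_le_smul_of_le_jacobson_bot (maximalIdeal A) K
    hKfg hKsmul (maximalIdeal_le_jacobson ⊥)
  refine le_antisymm (fun g' hg' => ?_) hspanle
  have h6 : Ideal.Quotient.mk (Ideal.span {P}) g' ∈ K := by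
    rw [hK, LinearMap.mem_ker, AlgHom.toLinearMap_apply, hψmk,
      Ideal.Quotient.eq_zero_iff_mem]
    exact hg'
  rw [hKbot, Submodule.mem_bot] at h6
  exact Ideal.Quotient.eq_zero_iff_mem.mp h6



lemma monic_gen_unique {A : Type*} [CommRing A] [Nontrivial A] {P Q : Polynomial A}
    (hPm : P.Monic) (hQm : Q.Monic) (h : Ideal.span {P} = Ideal.span {Q}) : Q = P := by
  obtain ⟨c, hc⟩ := Ideal.mem_span_singleton.mp (h ▸ Ideal.mem_span_singleton_self Q)
  obtain ⟨e, he⟩ := Ideal.mem_span_singleton.mp (h ▸ Ideal.mem_span_singleton_self P)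
  have hmul : P * (c * e) = P * 1 := by rw [mul_one, ← mul_assoc, ← hc, ← he]
  have hce : c * e = 1 := hPm.isRegular.left hmul
  have hcm : c.Monic := hPm.of_mul_monic_left (hc ▸ hQm)
  have hc1 : c = 1 := hcm.eq_one_of_isUnit (IsUnit.of_mul_eq_one (a := c) e hce)
  rw [hc, hc1, mul_one]

/-- Let `A` be a commutative Noetherian local ring and let `I ⊆ A[X]` be an ideal such that
the quotient ring `A[X]/I` is a finitely generated flat `A`-module. Then there exists a unique
monic polynomial `P ∈ A[X]` such that `I` is the ideal generated by `P`. -/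
theorem exists_unique_monic_generator {A : Type*} [CommRing A] [IsNoetherianRing A]
    [IsLocalRing A] (I : Ideal (Polynomial A))
    (hfin : Module.Finite A (Polynomial A ⧸ I))
    (hflat : Module.Flat A (Polynomial A ⧸ I)) :
    ∃! P : Polynomial A, P.Monic ∧ I = Ideal.span {P} := by
  obtain ⟨P, hPm, hPI, hJP⟩ := step1 I hfin
  have hIP : I = Ideal.span {P} := step2 I hfin hflat hPm hPI hJP
  exact ⟨P, ⟨hPm, hIP⟩, fun Q hQ => monic_gen_unique hPm hQ.1 (hIP.symm.trans hQ.2)⟩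
end

section
/- Let A be a nontrivial commutative ring and let P ∈ A[X] be a monic polynomial of degree n ≥ 1. If the polynomial P(X+Y) ∈ A[X,Y] lies in the ideal of A[X,Y] generated by P(X) and P(Y), then P(X+Y) = P(X) + P(Y) in A[X,Y]. -/
open Polynomial MvPolynomial

section Aux

variable {A : Type*} [CommRing A]

private lemma hasseDeriv_map_aux (k : ℕ) (P : Polynomial A) :
    Polynomial.hasseDeriv k (P.map (Polynomial.C : A →+* Polynomial A))
      = (Polynomial.hasseDeriv k P).map Polynomial.C := by
  ext i
  simp [Polynomial.hasseDeriv_coeff, Polynomial.coeff_map]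

private lemma coeff_key_aux (P : Polynomial A) (k : ℕ) :
    ((Polynomial.taylor (Polynomial.X : Polynomial A)
          (P.map (Polynomial.C : A →+* Polynomial A))
        - P.map (Polynomial.C : A →+* Polynomial A) - Polynomial.C P).coeff k)
      = Polynomial.hasseDeriv k P - Polynomial.C (P.coeff k)
        - (if k = 0 then P else 0) := by
  simp only [Polynomial.coeff_sub, Polynomial.taylor_coeff, hasseDeriv_map_aux,
    Polynomial.eval_map, Polynomial.coeff_map, Polynomial.coeff_C]
  congr 2
  exact Polynomial.eval₂_C_X

private lemma core_aux [Nontrivial A] {P : Polynomial A} (hP : P.Monic)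
    (hdeg : 1 ≤ P.natDegree) (a b : Polynomial (Polynomial A))
    (hab : a * (P.map (Polynomial.C : A →+* Polynomial A)) + b * Polynomial.C P
        = Polynomial.taylor (Polynomial.X : Polynomial A)
            (P.map (Polynomial.C : A →+* Polynomial A))) :
    Polynomial.taylor (Polynomial.X : Polynomial A)
        (P.map (Polynomial.C : A →+* Polynomial A))
      = P.map (Polynomial.C : A →+* Polynomial A) + Polynomial.C P := by
  set n := P.natDegree with hn
  set Q := P.map (Polynomial.C : A →+* Polynomial A) with hQ
  have hQm : Q.Monic := hP.map Polynomial.C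
  have hdQ : Q.degree = (n : WithBot ℕ) := by
    rw [hQ, hP.degree_map, Polynomial.degree_eq_natDegree hP.ne_zero]
  set D := Polynomial.taylor (Polynomial.X : Polynomial A) Q - Q - Polynomial.C P with hD
  have hcoeff : ∀ k, (D.coeff k).degree < (n : WithBot ℕ) := by
    intro k
    rw [hD, coeff_key_aux]
    rcases Nat.eq_zero_or_pos k with rfl | hk
    · have h2 : Polynomial.hasseDeriv 0 P - Polynomial.C (P.coeff 0)
          - (if (0:ℕ) = 0 then P else 0) = -Polynomial.C (P.coeff 0) := by
        rw [if_pos rfl, Polynomial.hasseDeriv_zero']; ring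
      rw [h2, Polynomial.degree_neg]
      calc (Polynomial.C (P.coeff 0)).degree ≤ 0 := Polynomial.degree_C_le
        _ < (n : WithBot ℕ) := by exact_mod_cast Nat.cast_lt.mpr hdeg
    · rw [if_neg hk.ne', sub_zero]
      apply lt_of_le_of_lt (Polynomial.degree_sub_le _ _)
      rw [max_lt_iff]
      constructor
      · calc (Polynomial.hasseDeriv k P).degree
            ≤ ((Polynomial.hasseDeriv k P).natDegree : WithBot ℕ) :=
              Polynomial.degree_le_natDegree
          _ ≤ ((n - k : ℕ) : WithBot ℕ) := by
              exact_mod_cast Polynomial.natDegree_hasseDeriv_le P k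
          _ < (n : WithBot ℕ) := by
              exact_mod_cast Nat.sub_lt (lt_of_lt_of_le Nat.zero_lt_one hdeg) hk
      · calc (Polynomial.C (P.coeff k)).degree ≤ 0 := Polynomial.degree_C_le
          _ < (n : WithBot ℕ) := by exact_mod_cast Nat.cast_lt.mpr hdeg
  have hDdeg : D.degree < Q.degree := by
    rw [hdQ, Polynomial.degree_lt_iff_coeff_zero]
    intro m hm
    rw [hD, coeff_key_aux]
    have hm' : n ≤ m := by exact_mod_cast hm
    have h1 : Polynomial.hasseDeriv m P = Polynomial.C (P.coeff m) := by
      ext i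
      rcases Nat.eq_zero_or_pos i with rfl | hi
      · simp [Polynomial.hasseDeriv_coeff]
      · rw [Polynomial.hasseDeriv_coeff, Polynomial.coeff_C, if_neg hi.ne']
        have : P.coeff (i + m) = 0 := by
          apply Polynomial.coeff_eq_zero_of_natDegree_lt
          omega
        simp [this]
    rw [h1, if_neg (by omega), sub_zero, sub_self]
  have hDI : D = a * Q + b * Polynomial.C P - Q - Polynomial.C P := by rw [hD, hab]
  have hDI' : D = (a - 1) * Q + (b - 1) * Polynomial.C P := by rw [hDI]; ring
  have hmod : D %ₘ Q = D := (Polynomial.modByMonic_eq_self_iff hQm).2 hDdeg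
  have h0 : ((a - 1) * Q) %ₘ Q = 0 :=
    (Polynomial.modByMonic_eq_zero_iff_dvd hQm).2 ⟨a - 1, mul_comm _ _⟩
  have hsm : ((b - 1) * Polynomial.C P) %ₘ Q = P • ((b - 1) %ₘ Q) := by
    rw [mul_comm, ← Polynomial.smul_eq_C_mul, Polynomial.smul_modByMonic]
  have hDP : D = P • ((b - 1) %ₘ Q) := by
    conv_lhs => rw [← hmod, hDI', Polynomial.add_modByMonic, h0, hsm, zero_add]
  set c := (b - 1) %ₘ Q with hc
  have hck0 : ∀ k, c.coeff k = 0 := by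
    intro k
    by_contra hck
    have hDk : D.coeff k = P * c.coeff k := by rw [hDP, Polynomial.coeff_smul, smul_eq_mul]
    have hmul : (P * c.coeff k).degree = (c.coeff k).degree + P.degree := by
      rw [mul_comm]; exact hP.degree_mul
    have hge : (n : WithBot ℕ) ≤ (P * c.coeff k).degree := by
      rw [hmul, Polynomial.degree_eq_natDegree hP.ne_zero, ← hn]
      have : (0 : WithBot ℕ) ≤ (c.coeff k).degree := Polynomial.zero_le_degree_iff.mpr hck
      calc (n : WithBot ℕ) = 0 + (n : WithBot ℕ) := by rw [zero_add]
        _ ≤ (c.coeff k).degree + (n : WithBot ℕ) := by exact add_le_add_left this _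
    rw [← hDk] at hge
    exact absurd (hcoeff k) (not_lt.2 hge)
  have hczero : c = 0 := Polynomial.ext fun k => by rw [hck0]; simp
  have : D = 0 := by rw [hDP, hczero, smul_zero]
  rw [hD] at this
  linear_combination this

private lemma aeval_X_eq (P : Polynomial A) :
    Polynomial.aeval (Polynomial.X : Polynomial (Polynomial A)) P
      = P.map (Polynomial.C : A →+* Polynomial A) := by
  rw [Polynomial.aeval_def,
    ← Polynomial.eval₂_C_X (p := P.map (Polynomial.C : A →+* Polynomial A)),
    Polynomial.eval₂_map]
  rfl

private lemma aeval_CX_eq (P : Polynomial A) :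
    Polynomial.aeval (Polynomial.C Polynomial.X : Polynomial (Polynomial A)) P
      = Polynomial.C P := by
  have := Polynomial.aeval_algHom_apply
    (Polynomial.CAlgHom : Polynomial A →ₐ[A] Polynomial (Polynomial A))
    (Polynomial.X : Polynomial A) P
  simp only [Polynomial.CAlgHom_apply] at this
  rw [this, Polynomial.aeval_X_left_apply]

private lemma aeval_add_eq (P : Polynomial A) :
    Polynomial.aeval (Polynomial.X + Polynomial.C Polynomial.X :
        Polynomial (Polynomial A)) P
      = Polynomial.taylor (Polynomial.X : Polynomial A)
          (P.map (Polynomial.C : A →+* Polynomial A)) := by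
  rw [Polynomial.taylor_apply, Polynomial.comp, Polynomial.eval₂_map, Polynomial.aeval_def]
  rfl

end Aux

/-- Let `A` be a nontrivial commutative ring and let `P ∈ A[X]` be a monic polynomial of
degree `n ≥ 1`. If the polynomial `P(X+Y) ∈ A[X,Y]` lies in the ideal of `A[X,Y]` generated
by `P(X)` and `P(Y)`, then `P(X+Y) = P(X) + P(Y)` in `A[X,Y]`. -/
theorem additive_of_mem_span {A : Type*} [CommRing A] [Nontrivial A]
    {P : Polynomial A} (hP : P.Monic) (hdeg : 1 ≤ P.natDegree)
    (h : Polynomial.aeval (MvPolynomial.X 0 + MvPolynomial.X 1 : MvPolynomial (Fin 2) A) P ∈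
      Ideal.span {Polynomial.aeval (MvPolynomial.X 0 : MvPolynomial (Fin 2) A) P,
        Polynomial.aeval (MvPolynomial.X 1 : MvPolynomial (Fin 2) A) P}) :
    Polynomial.aeval (MvPolynomial.X 0 + MvPolynomial.X 1 : MvPolynomial (Fin 2) A) P =
      Polynomial.aeval (MvPolynomial.X 0 : MvPolynomial (Fin 2) A) P +
        Polynomial.aeval (MvPolynomial.X 1 : MvPolynomial (Fin 2) A) P := by
  classical
  -- the algebra map to `A[Y][X]`
  set φ : MvPolynomial (Fin 2) A →ₐ[A] Polynomial (Polynomial A) :=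
    MvPolynomial.aeval ![Polynomial.X, Polynomial.C Polynomial.X] with hφ
  set ψ : Polynomial (Polynomial A) →ₐ[A] MvPolynomial (Fin 2) A :=
    Polynomial.aevalTower (Polynomial.aeval (MvPolynomial.X 1)) (MvPolynomial.X 0) with hψ
  have hφ0 : φ (MvPolynomial.X 0) = Polynomial.X := by simp [hφ]
  have hφ1 : φ (MvPolynomial.X 1) = Polynomial.C Polynomial.X := by simp [hφ]
  have hinj : Function.Injective φ := by
    have hcomp : ψ.comp φ = AlgHom.id A (MvPolynomial (Fin 2) A) := by
      apply MvPolynomial.algHom_ext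
      intro i
      fin_cases i
      · simp [hφ0, hψ]
      · simp [hφ1, hψ]
    intro x y hxy
    have := congrArg ψ hxy
    calc x = (ψ.comp φ) x := by rw [hcomp]; rfl
      _ = (ψ.comp φ) y := this
      _ = y := by rw [hcomp]; rfl
  obtain ⟨a, b, hab⟩ := Ideal.mem_span_pair.mp h
  apply hinj
  have e0 : φ (Polynomial.aeval (MvPolynomial.X 0 : MvPolynomial (Fin 2) A) P)
      = P.map (Polynomial.C : A →+* Polynomial A) := by
    rw [← Polynomial.aeval_algHom_apply, hφ0, aeval_X_eq]
  have e1 : φ (Polynomial.aeval (MvPolynomial.X 1 : MvPolynomial (Fin 2) A) P)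
      = Polynomial.C P := by
    rw [← Polynomial.aeval_algHom_apply, hφ1, aeval_CX_eq]
  have e2 : φ (Polynomial.aeval
        (MvPolynomial.X 0 + MvPolynomial.X 1 : MvPolynomial (Fin 2) A) P)
      = Polynomial.taylor (Polynomial.X : Polynomial A)
          (P.map (Polynomial.C : A →+* Polynomial A)) := by
    rw [← Polynomial.aeval_algHom_apply, map_add, hφ0, hφ1, aeval_add_eq]
  have hab' : φ a * (P.map (Polynomial.C : A →+* Polynomial A)) + φ b * Polynomial.C P
      = Polynomial.taylor (Polynomial.X : Polynomial A)
          (P.map (Polynomial.C : A →+* Polynomial A)) := by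
    have h3 := congrArg φ hab
    rw [map_add, map_mul, map_mul, e0, e1, e2] at h3
    exact h3
  rw [map_add, e0, e1, e2]
  exact core_aux hP hdeg (φ a) (φ b) hab'
end

section
/- Let p be a prime number and let n ≥ 2 be a natural number that is not a power of p. Then there exists an index i with 0 < i < n such that p does not divide the binomial coefficient C(n, i). -/
open Nat Finset

/-- Let `p` be a prime number and let `n ≥ 2` be a natural number that is not a power of `p`.
Then there exists an index `i` with `0 < i < n` such that `p` does not divide the binomial
coefficient `C(n, i)`. -/
theorem exists_choose_not_dvd {p n : ℕ} (hp : p.Prime) (hn : 2 ≤ n)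
    (h : ∀ m : ℕ, n ≠ p ^ m) :
    ∃ i : ℕ, 0 < i ∧ i < n ∧ ¬ p ∣ n.choose i := by
  haveI : Fact p.Prime := ⟨hp⟩
  set k := n.factorization p with hk
  set m := n / p ^ k with hm
  have hn0 : n ≠ 0 := by omega
  have hdvd : p ^ k ∣ n := Nat.ordProj_dvd n p
  have hnm : n = p ^ k * m := (Nat.div_mul_cancel hdvd).symm.trans (mul_comm _ _)
  have hpm : ¬ p ∣ m := Nat.not_dvd_ordCompl hp hn0
  have hm1 : m ≠ 1 := by
    intro h1
    exact h k (by rw [hnm, h1, mul_one])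
  have hm0 : m ≠ 0 := by
    intro h0; rw [hnm, h0, mul_zero] at hn0; exact hn0 rfl
  have hm2 : 2 ≤ m := lt_of_le_of_ne (Nat.one_le_iff_ne_zero.mpr hm0) (Ne.symm hm1)
  refine ⟨p ^ k, pow_pos hp.pos k, ?_, ?_⟩
  · calc p ^ k < p ^ k * m := lt_mul_of_one_lt_right (pow_pos hp.pos k) hm2
      _ = n := hnm.symm
  · have lucas := Choose.choose_modEq_choose_mul_prod_range_choose (n := n) (k := p ^ k) (p := p) k
    have hprod : ∏ i ∈ range k, Nat.choose (n / p ^ i % p) (p ^ k / p ^ i % p) = 1 := by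
      apply Finset.prod_eq_one
      intro i hi
      have hik : i < k := Finset.mem_range.mp hi
      have : p ^ k / p ^ i = p ^ (k - i) := Nat.pow_div (le_of_lt hik) hp.pos
      have hmod : p ^ k / p ^ i % p = 0 := by
        rw [this]
        exact Nat.eq_zero_of_dvd_of_lt (Nat.dvd_mod_iff (dvd_refl p) |>.mpr
          (dvd_pow_self p (by omega))) (Nat.mod_lt _ hp.pos)
      rw [hmod, Nat.choose_zero_right]
    have hq : p ^ k / p ^ k = 1 := Nat.div_self (pow_pos hp.pos k)
    rw [hq, hprod, Nat.cast_one, mul_one, Nat.choose_one_right] at lucas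
    intro hdvd'
    have h1 : (p : ℤ) ∣ (n.choose (p ^ k) : ℤ) := Int.natCast_dvd_natCast.mpr hdvd'
    have h2 : (p : ℤ) ∣ ((n / p ^ k : ℕ) : ℤ) := by
      have := dvd_add lucas.dvd h1
      simpa using this
    exact hpm (Int.natCast_dvd_natCast.mp h2)
end
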